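/- arXiv:1405.7757 — 2 statements merged into one kernel-verified Lean document; each statement's English description precedes it below -/
import Mathlib

section
/- In a directed graph with no loops having entrances, every loop is obtained by iterating a simple loop: if α is a loop at a vertex v, then there is a simple loop β at v and k ≥ 1 such that α = β^k (concatenation of k copies of β). -/
/-- In a graph in which no loop has an entrance, every loop is the iterate of a simple
loop based at the same vertex: if `α : ZMod m → E` is a loop, there are `n, k ≥ 1` with
`m = n * k` and a simple loop `β : ZMod n → E` at the same vertex with `α = β ∘ cast`. -/
theorem loop_eq_iterate_simple_loop {V E : Type*} (r s : E → V)
    (hno : ∀ (n : ℕ), 0 < n → ∀ α : ZMod n → E,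
      (∀ i, r (α i) = s (α (i + 1))) → ∀ (i : ZMod n) (e : E), r e = r (α i) → e = α i)
    (m : ℕ) (hm : 0 < m) (α : ZMod m → E)
    (hα : ∀ i, r (α i) = s (α (i + 1))) :
    ∃ (n k : ℕ), 0 < n ∧ 1 ≤ k ∧ m = n * k ∧
      ∃ (hd : n ∣ m) (β : ZMod n → E),
        (∀ i, r (β i) = s (β (i + 1))) ∧
        (Function.Injective fun i => r (β i)) ∧
        s (β 0) = s (α 0) ∧
        ∀ i : ZMod m, α i = β (ZMod.castHom hd (ZMod n) i) := by
  classical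
  haveI : NeZero m := ⟨hm.ne'⟩
  -- Key periodicity lemma: if two edges of `α` have the same range, then
  -- their index difference is a period of `α`.
  have key : ∀ i j : ZMod m, r (α i) = r (α j) →
      ∀ x : ZMod m, α (x + (j - i)) = α x := by
    intro i j h
    have step : ∀ t : ℕ, α (i - t) = α (j - t) := by
      intro t
      induction t with
      | zero => simpa using (hno m hm α hα i (α j) h.symm).symm
      | succ t ih =>
        have h1 : r (α (i - ((t + 1 : ℕ) : ZMod m))) = s (α (i - t)) := by
          have h' := hα (i - ((t + 1 : ℕ) : ZMod m))
          rw [h']; congr 2; push_cast; ring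
        have h2 : r (α (j - ((t + 1 : ℕ) : ZMod m))) = s (α (j - t)) := by
          have h' := hα (j - ((t + 1 : ℕ) : ZMod m))
          rw [h']; congr 2; push_cast; ring
        have h3 : r (α (j - ((t + 1 : ℕ) : ZMod m))) =
            r (α (i - ((t + 1 : ℕ) : ZMod m))) := by rw [h1, h2, ih]
        exact (hno m hm α hα _ _ h3).symm
    intro x
    have ht : (((i - x).val : ℕ) : ZMod m) = i - x := ZMod.natCast_rightInverse _
    have hs := step (i - x).val
    rw [ht] at hs
    have e1 : i - (i - x) = x := by ring
    have e2 : j - (i - x) = x + (j - i) := by ring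
    rw [e1, e2] at hs
    exact hs.symm
  -- periods
  set P : ℕ → Prop := fun d => ∀ x : ZMod m, α (x + (d : ZMod m)) = α x with hPdef
  have hPm : P m := by intro x; simp
  have hex : ∃ d, 0 < d ∧ P d := ⟨m, hm, hPm⟩
  set n := Nat.find hex with hndef
  obtain ⟨hn0, hPn⟩ := Nat.find_spec hex
  haveI : NeZero n := ⟨hn0.ne'⟩
  have hmul : ∀ q : ℕ, P (n * q) := by
    intro q
    induction q with
    | zero => intro x; simp
    | succ q ih =>
      intro x
      have e : ((n * (q + 1) : ℕ) : ZMod m) = ((n * q : ℕ) : ZMod m) + ((n : ℕ) : ZMod m) := by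
        push_cast; ring
      have e2 : x + (((n * q : ℕ) : ZMod m) + ((n : ℕ) : ZMod m))
          = (x + ((n * q : ℕ) : ZMod m)) + ((n : ℕ) : ZMod m) := by ring
      rw [e, e2, hPn, ih]
  have hmod : ∀ d : ℕ, P d → P (d % n) := by
    intro d hd x
    have e : ((d % n : ℕ) : ZMod m) + ((n * (d / n) : ℕ) : ZMod m) = (d : ZMod m) := by
      rw [← Nat.cast_add, Nat.mod_add_div]
    calc α (x + ((d % n : ℕ) : ZMod m))
        = α ((x + ((d % n : ℕ) : ZMod m)) + ((n * (d / n) : ℕ) : ZMod m)) :=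
          (hmul (d / n) _).symm
      _ = α (x + (d : ZMod m)) := by rw [add_assoc, e]
      _ = α x := hd x
  have hdvd : ∀ d : ℕ, P d → n ∣ d := by
    intro d hd
    have hmd := hmod d hd
    rcases Nat.eq_zero_or_pos (d % n) with h0 | h0
    · exact Nat.dvd_of_mod_eq_zero h0
    · exact absurd ⟨h0, hmd⟩ (Nat.find_min hex (Nat.mod_lt d hn0))
  have hnm : n ∣ m := hdvd m hPm
  have hL : ∀ a : ℕ, α ((a : ℕ) : ZMod m) = α ((a % n : ℕ) : ZMod m) := by
    intro a
    have e : ((a : ℕ) : ZMod m) = ((a % n : ℕ) : ZMod m) + ((n * (a / n) : ℕ) : ZMod m) := by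
      rw [← Nat.cast_add, Nat.mod_add_div]
    rw [e]
    exact hmul (a / n) _
  have hvalcast : ∀ j : ZMod n, ((j.val : ℕ) : ZMod n) = j := fun j =>
    ZMod.natCast_rightInverse j
  refine ⟨n, m / n, hn0, ?_, ?_, hnm, (fun j : ZMod n => α ((j.val : ℕ) : ZMod m)),
    ?_, ?_, ?_, ?_⟩
  · exact (Nat.one_le_div_iff hn0).mpr (Nat.le_of_dvd hm hnm)
  · exact (Nat.mul_div_cancel' hnm).symm
  · -- loop property
    intro i
    have h2 : (i + 1).val = (i.val + 1) % n := by
      conv_lhs => rw [← hvalcast i]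
      rw [show ((i.val : ℕ) : ZMod n) + 1 = ((i.val + 1 : ℕ) : ZMod n) by push_cast; ring,
        ZMod.val_natCast]
    have h3 : α (((i + 1).val : ℕ) : ZMod m) = α ((i.val + 1 : ℕ) : ZMod m) := by
      rw [h2]; exact (hL (i.val + 1)).symm
    have h4 := hα ((i.val : ℕ) : ZMod m)
    simp only []
    rw [h4, h3]
    congr 2
    push_cast; ring
  · -- injectivity
    intro i j hij
    simp only [] at hij
    set d : ZMod m := ((j.val : ℕ) : ZMod m) - ((i.val : ℕ) : ZMod m) with hd
    have hc : ((d.val : ℕ) : ZMod m) = d := ZMod.natCast_rightInverse _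
    have hPt : P d.val := by
      intro x
      have hk := key _ _ hij x
      rw [hc]
      exact hk
    have hnd : n ∣ d.val := hdvd _ hPt
    have e : ((j.val : ℕ) : ZMod m) = ((i.val : ℕ) : ZMod m) + d := by rw [hd]; ring
    have e2 := congrArg (ZMod.castHom hnm (ZMod n)) e
    rw [← hc] at e2
    simp only [map_natCast, map_add] at e2
    rw [(ZMod.natCast_eq_zero_iff _ _).mpr hnd, add_zero, hvalcast, hvalcast] at e2
    exact e2.symm
  · -- base point
    simp
  · -- compatibility
    intro i
    have e : ((ZMod.castHom hnm (ZMod n)) i).val = i.val % n := by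
      rw [ZMod.castHom_apply, ← ZMod.natCast_val, ZMod.val_natCast]
    simp only []
    rw [e, ← hL i.val, ZMod.natCast_rightInverse i]
end

section
/- If a graph E contains a loop with an entrance, then in any Cuntz–Krieger E-family with all vertex projections nonzero, the C*-algebra generated is infinite (contains an infinite projection). -/
/-- A Cuntz–Krieger `E`-family in a `*`-algebra `A`, for the directed graph with vertices
`V`, edges `E`, range map `r` and source map `s`. -/
structure CKFamily {V E : Type*} [DecidableEq E] (r s : E → V) (A : Type*) [Ring A] [StarRing A] where
  /-- vertex projections -/
  p : V → A
  /-- edge partial isometries -/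
  se : E → A
  p_sa : ∀ v, IsSelfAdjoint (p v)
  p_idem : ∀ v, p v * p v = p v
  p_orth : ∀ v w, v ≠ w → p v * p w = 0
  rel : ∀ e f, star (se e) * se f = if e = f then p (s e) else 0
  range_le : ∀ e, p (r e) * se e = se e
  ck : ∀ (v : V) (hf : {e : E | r e = v}.Finite), hf.toFinset.Nonempty →
      p v = ∑ e ∈ hf.toFinset, se e * star (se e)

/-- `l` is a path, written as the list `(αₙ, …, α₁)` of its edges from range to source:
consecutive edges compose, `s αᵢ₊₁ = r αᵢ`. -/
def IsPath {V E : Type*} (r s : E → V) (l : List E) : Prop :=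
  l ≠ [] ∧ l.Chain' fun a b => s a = r b

/-- The partial isometry `s_α = s_{αₙ} ⋯ s_{α₁}` associated to a path `α = (αₙ, …, α₁)`. -/
def CKFamily.sp {V E : Type*} [DecidableEq E] {r s : E → V} {A : Type*} [Ring A] [StarRing A]
    (F : CKFamily r s A) (l : List E) : A :=
  (l.map F.se).prod

section Aux

variable {V E : Type*} [DecidableEq E] {r s : E → V} {A : Type*} [Ring A] [StarRing A]
  (F : CKFamily r s A)

lemma CKFamily.sp_append (l₁ l₂ : List E) : F.sp (l₁ ++ l₂) = F.sp l₁ * F.sp l₂ := by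
  simp [CKFamily.sp]

lemma CKFamily.sp_cons (x : E) (l : List E) : F.sp (x :: l) = F.se x * F.sp l := by
  simp [CKFamily.sp]

lemma CKFamily.sp_head_mul (l : List E) (h : l ≠ []) :
    F.p (r (l.head h)) * F.sp l = F.sp l := by
  cases l with
  | nil => exact absurd rfl h
  | cons x rest =>
    rw [List.head_cons, F.sp_cons, ← mul_assoc, F.range_le]

lemma CKFamily.star_sp_mul_sp (l : List E) (h : l ≠ [])
    (hc : l.Chain' fun a b => s a = r b) :
    star (F.sp l) * F.sp l = F.p (s (l.getLast h)) := by
  induction l with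
  | nil => exact absurd rfl h
  | cons x rest ih =>
    cases rest with
    | nil => simp [CKFamily.sp, F.rel]
    | cons y rest' =>
      have hxy : s x = r y := (List.isChain_cons_cons.mp hc).1
      have h2 : (y :: rest') ≠ [] := by simp
      rw [F.sp_cons, star_mul, mul_assoc, ← mul_assoc (star (F.se x)), F.rel, if_pos rfl,
        hxy]
      have hhd := F.sp_head_mul (y :: rest') h2
      rw [List.head_cons] at hhd
      rw [← mul_assoc, mul_assoc (star (F.sp (y :: rest'))), hhd,
        ih h2 hc.tail]
      rfl

end Aux

/-- If a graph contains a loop with an entrance, then for any Cuntz–Krieger family with all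
vertex projections nonzero, the ambient C*-algebra contains an infinite projection. -/
theorem CKFamily.infinite_of_loop_with_entrance {V E : Type*} [DecidableEq E] {r s : E → V}
    {A : Type*} [NormedRing A] [StarRing A] [CStarRing A] [NormedAlgebra ℂ A]
    [CompleteSpace A] [PartialOrder A] [StarOrderedRing A]
    (F : CKFamily r s A) (hpv : ∀ v, F.p v ≠ 0)
    (l : List E) (hl : IsPath r s l) (hne : l ≠ [])
    (hloop : r (l.head hne) = s (l.getLast hne))
    (hentrance : ∃ (e : E) (a : E), a ∈ l ∧ r e = r a ∧ e ≠ a) :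
    ∃ q t : A, IsSelfAdjoint q ∧ q * q = q ∧
      star t * t = q ∧ t * star t ≤ q ∧ t * star t ≠ q := by
  set v := s (l.getLast hne) with hv
  set t := F.sp l with ht
  -- basic identities
  have hq : star t * t = F.p v := F.star_sp_mul_sp l hne hl.2
  have hqt : F.p v * t = t := by
    rw [← hloop]; exact F.sp_head_mul l hne
  have htq : t * F.p v = t := by
    have key : star (t * F.p v - t) * (t * F.p v - t) = 0 := by
      have expand : star (t * F.p v - t) * (t * F.p v - t)
          = F.p v * (star t * t) * F.p v - F.p v * (star t * t)
            - (star t * t) * F.p v + star t * t := by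
        rw [star_sub, star_mul, (F.p_sa v).star_eq]
        noncomm_ring
      rw [expand, hq, F.p_idem, F.p_idem]
      abel
    have := (CStarRing.star_mul_self_eq_zero_iff _).mp key
    exact sub_eq_zero.mp this
  have heq : (t * star t) * F.p v = t * star t := by
    rw [mul_assoc]
    congr 1
    have : star t * F.p v = star ((F.p v) * t) := by
      rw [star_mul, (F.p_sa v).star_eq]
    rw [this, hqt]
  have hqe : F.p v * (t * star t) = t * star t := by
    rw [← mul_assoc, hqt]
  have he_sa : IsSelfAdjoint (t * star t) := by
    simp [IsSelfAdjoint, star_mul]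
  refine ⟨F.p v, t, F.p_sa v, F.p_idem v, hq, ?_, ?_⟩
  · -- t * star t ≤ p v
    have hsub : F.p v - t * star t = star (F.p v - t * star t) * (F.p v - t * star t) := by
      rw [star_sub, (F.p_sa v).star_eq, he_sa.star_eq]
      have : (F.p v - t * star t) * (F.p v - t * star t)
          = F.p v * F.p v - F.p v * (t * star t) - (t * star t) * F.p v
            + (t * star t) * (t * star t) := by noncomm_ring
      have hee : (t * star t) * (t * star t) = t * star t := by
        rw [mul_assoc, ← mul_assoc (star t), hq, ← mul_assoc, htq]
      rw [this, hee, F.p_idem, hqe, heq]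
      abel
    have : (0 : A) ≤ F.p v - t * star t := hsub ▸ star_mul_self_nonneg _
    exact sub_nonneg.mp this
  · -- t * star t ≠ p v
    intro h
    obtain ⟨f, a, ha, hrf, hfa⟩ := hentrance
    obtain ⟨l₁, l₂, rfl⟩ := List.append_of_mem ha
    -- the tail path starting at a
    set t₂ := F.sp (a :: l₂) with ht₂
    have hsplit : t = F.sp l₁ * t₂ := by rw [ht, F.sp_append]
    have hpra_t₂ : F.p (r a) * t₂ = t₂ := by
      have := F.sp_head_mul (a :: l₂) (by simp)
      rwa [List.head_cons] at this
    -- star (sp l₁) * sp l₁ acts as p (r a) on t₂, and p v * sp l₁ = sp l₁-type facts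
    have hA : star (F.sp l₁) * t = t₂ := by
      rcases eq_or_ne l₁ [] with h1 | h1
      · subst h1; simp [hsplit, CKFamily.sp]
      · have hc := List.isChain_append.mp hl.2
        have hlast : s (l₁.getLast h1) = r a := by
          have := hc.2.2 (l₁.getLast h1)
            (by rw [List.getLast?_eq_getLast_of_ne_nil h1]; rfl) a rfl
          exact this
        have h11 : star (F.sp l₁) * F.sp l₁ = F.p (r a) := by
          rw [F.star_sp_mul_sp l₁ h1 hc.1, hlast]
        rw [hsplit, ← mul_assoc, h11, hpra_t₂]
    have hB : star (F.sp l₁) * F.p v * F.sp l₁ = F.p (r a) := by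
      rcases eq_or_ne l₁ [] with h1 | h1
      · subst h1
        have hhead : (([] : List E) ++ a :: l₂).head hne = a := rfl
        have : F.p v = F.p (r a) := by rw [← hloop, hhead]
        simp [CKFamily.sp, this]
      · have hc := List.isChain_append.mp hl.2
        have hlast : s (l₁.getLast h1) = r a := by
          exact hc.2.2 (l₁.getLast h1)
            (by rw [List.getLast?_eq_getLast_of_ne_nil h1]; rfl) a rfl
        have hhead : (l₁ ++ a :: l₂).head hne = l₁.head h1 := by
          cases l₁ with
          | nil => exact absurd rfl h1
          | cons x rest => rfl
        have hqsp : F.p v * F.sp l₁ = F.sp l₁ := by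
          rw [← hloop, hhead]; exact F.sp_head_mul l₁ h1
        rw [mul_assoc, hqsp, F.star_sp_mul_sp l₁ h1 hc.1, hlast]
    have ht₂t₂ : t₂ * star t₂ = F.p (r a) := by
      have : t₂ * star t₂ = star (F.sp l₁) * (t * star t) * F.sp l₁ := by
        rw [← hA, star_mul, star_star]
        noncomm_ring
      rw [this, h, hB]
    -- now derive the contradiction from the entrance edge f
    have hsf : F.se f = F.p (r a) * F.se f := by rw [← hrf, F.range_le]
    have hzero : star (F.se f) * t₂ = 0 := by
      rw [ht₂, F.sp_cons, ← mul_assoc, F.rel, if_neg hfa, zero_mul]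
    have : F.p (s f) = 0 :=
      calc F.p (s f) = star (F.se f) * F.se f := by rw [F.rel, if_pos rfl]
        _ = star (F.se f) * (F.p (r a) * F.se f) := by rw [← hsf]
        _ = star (F.se f) * (t₂ * star t₂ * F.se f) := by rw [ht₂t₂]
        _ = (star (F.se f) * t₂) * (star t₂ * F.se f) := by noncomm_ring
        _ = 0 := by rw [hzero, zero_mul]
    exact hpv _ this
end
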